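/- Let G be a finite directed graph with nonnegative capacities, fixed nodes s, t, and arc e = (x, y). Construct G' by adding to G two new arcs (x, s) and (s, x) and two new arcs (y, t) and (t, y), each with capacity M strictly greater than the sum of all capacities of G. Then every minimum s-t cut (S, T) of G' satisfies x ∈ S and y ∈ T, i.e., it crosses e; moreover its capacity equals the minimum capacity over all s-t cuts of G with x ∈ S and y ∈ T. -/
import Mathlib


open Finset

/-- Capacity of the s-t cut determined by `S` (arcs from `S` to its complement). -/
def cutCap {V : Type*} [Fintype V] [DecidableEq V] (c : V → V → ℝ) (S : Finset V) : ℝ :=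
  ∑ x ∈ S, ∑ y ∈ Sᶜ, c x y

/-- Minimum capacity of an s-t cut. -/
noncomputable def minCut {V : Type*} [Fintype V] [DecidableEq V] (c : V → V → ℝ)
    (s t : V) : ℝ :=
  sInf {r | ∃ S : Finset V, s ∈ S ∧ t ∉ S ∧ r = cutCap c S}

/-- The graph with arc `e` deleted (its capacity set to `0`). -/
def delArc {V : Type*} [DecidableEq V] (c : V → V → ℝ) (e : V × V) : V → V → ℝ :=
  fun x y => if (x, y) = e then 0 else c x y

/-- Minimum capacity among s-t cuts crossed by the arc `e`. -/
noncomputable def minCutCross {V : Type*} [Fintype V] [DecidableEq V] (c : V → V → ℝ)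
    (s t : V) (e : V × V) : ℝ :=
  sInf {r | ∃ S : Finset V, s ∈ S ∧ t ∉ S ∧ e.1 ∈ S ∧ e.2 ∉ S ∧ r = cutCap c S}

theorem minCut_add_high_capacity_arcs {V : Type*} [Fintype V] [DecidableEq V]
    (c : V → V → ℝ) (hc : ∀ a b, 0 ≤ c a b) (s t x y : V) (hst : s ≠ t)
    (hxy : x ≠ y) (hxs : x ≠ s) (hxt : x ≠ t) (hys : y ≠ s) (hyt : y ≠ t)
    (M : ℝ) (hM : ∑ a : V, ∑ b : V, c a b < M)
    -- G' : G with the four added arcs (x,s), (s,x), (y,t), (t,y) of capacity M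
    (c' : V → V → ℝ)
    (hc' : c' = fun a b =>
      if (a, b) = (x, s) ∨ (a, b) = (s, x) ∨ (a, b) = (y, t) ∨ (a, b) = (t, y)
      then M else c a b) :
    (∀ S : Finset V, s ∈ S → t ∉ S → cutCap c' S = minCut c' s t → x ∈ S ∧ y ∉ S) ∧
      minCut c' s t = minCutCross c s t (x, y) := by
  subst hc'
  set c' : V → V → ℝ := fun a b =>
      if (a, b) = (x, s) ∨ (a, b) = (s, x) ∨ (a, b) = (y, t) ∨ (a, b) = (t, y)
      then M else c a b with hc'
  have hsum0 : (0:ℝ) ≤ ∑ a : V, ∑ b : V, c a b :=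
    Finset.sum_nonneg fun a _ => Finset.sum_nonneg fun b _ => hc a b
  have hM0 : (0:ℝ) ≤ M := le_of_lt (lt_of_le_of_lt hsum0 hM)
  have hc'nn : ∀ a b, 0 ≤ c' a b := by
    intro a b
    simp only [hc']
    split
    · exact hM0
    · exact hc a b
  -- crossing cuts: capacities agree
  have hcross : ∀ S : Finset V, s ∈ S → t ∉ S → x ∈ S → y ∉ S →
      cutCap c' S = cutCap c S := by
    intro S hs ht hx hy
    refine Finset.sum_congr rfl fun a ha => Finset.sum_congr rfl fun b hb => ?_
    have hb' : b ∉ S := Finset.mem_compl.mp hb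
    simp only [hc']
    rw [if_neg]
    rintro (h | h | h | h) <;> rw [Prod.mk.injEq] at h
    · exact hb' (h.2 ▸ hs)
    · exact hb' (h.2 ▸ hx)
    · exact hy (h.1 ▸ ha)
    · exact ht (h.1 ▸ ha)
  -- non-crossing cuts are big
  have hbig : ∀ S : Finset V, s ∈ S → t ∉ S → (x ∉ S ∨ y ∈ S) → M ≤ cutCap c' S := by
    intro S hs ht h
    rcases h with hx | hy
    · have h1 : c' s x ≤ ∑ b ∈ Sᶜ, c' s b :=
        Finset.single_le_sum (fun b _ => hc'nn s b) (Finset.mem_compl.mpr hx)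
      have h2 : (∑ b ∈ Sᶜ, c' s b) ≤ cutCap c' S :=
        Finset.single_le_sum (f := fun a => ∑ b ∈ Sᶜ, c' a b)
          (fun a _ => Finset.sum_nonneg fun b _ => hc'nn a b) hs
      have : c' s x = M := by simp [hc']
      linarith
    · have h1 : c' y t ≤ ∑ b ∈ Sᶜ, c' y b :=
        Finset.single_le_sum (fun b _ => hc'nn y b) (Finset.mem_compl.mpr ht)
      have h2 : (∑ b ∈ Sᶜ, c' y b) ≤ cutCap c' S :=
        Finset.single_le_sum (f := fun a => ∑ b ∈ Sᶜ, c' a b)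
          (fun a _ => Finset.sum_nonneg fun b _ => hc'nn a b) hy
      have : c' y t = M := by simp [hc']
      linarith
  -- every cut capacity is at most the total
  have hle : ∀ S : Finset V, cutCap c S ≤ ∑ a : V, ∑ b : V, c a b := by
    intro S
    calc cutCap c S ≤ ∑ a ∈ S, ∑ b : V, c a b :=
          Finset.sum_le_sum fun a _ =>
            Finset.sum_le_sum_of_subset_of_nonneg (Finset.subset_univ _)
              (fun b _ _ => hc a b)
      _ ≤ ∑ a : V, ∑ b : V, c a b :=
          Finset.sum_le_sum_of_subset_of_nonneg (Finset.subset_univ _)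
            (fun a _ _ => Finset.sum_nonneg fun b _ => hc a b)
  -- the witness cut S₀ = {s, x}
  set S₀ : Finset V := {s, x} with hS₀
  have hs0 : s ∈ S₀ := by simp [hS₀]
  have ht0 : t ∉ S₀ := by simp [hS₀, Ne.symm hst, Ne.symm hxt]
  have hx0 : x ∈ S₀ := by simp [hS₀]
  have hy0 : y ∉ S₀ := by simp [hS₀, hys, Ne.symm hxy]
  -- sets of cut values
  set T' : Set ℝ := {r | ∃ S : Finset V, s ∈ S ∧ t ∉ S ∧ r = cutCap c' S} with hT'
  set Tc : Set ℝ :=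
    {r | ∃ S : Finset V, s ∈ S ∧ t ∉ S ∧ x ∈ S ∧ y ∉ S ∧ r = cutCap c S} with hTc
  have hT'fin : T'.Finite :=
    Set.Finite.subset (Set.finite_range (cutCap c'))
      (by rintro r ⟨S, _, _, rfl⟩; exact ⟨S, rfl⟩)
  have hTcfin : Tc.Finite :=
    Set.Finite.subset (Set.finite_range (cutCap c))
      (by rintro r ⟨S, _, _, _, _, rfl⟩; exact ⟨S, rfl⟩)
  have hT'ne : T'.Nonempty := ⟨cutCap c' S₀, S₀, hs0, ht0, rfl⟩
  have hTcne : Tc.Nonempty := ⟨cutCap c S₀, S₀, hs0, ht0, hx0, hy0, rfl⟩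
  have hT'bdd : BddBelow T' := hT'fin.bddBelow
  have hTcbdd : BddBelow Tc := hTcfin.bddBelow
  have hminT' : minCut c' s t = sInf T' := rfl
  have hmin_lt : minCut c' s t < M := by
    rw [hminT']
    calc sInf T' ≤ cutCap c' S₀ := csInf_le hT'bdd ⟨S₀, hs0, ht0, rfl⟩
      _ = cutCap c S₀ := hcross S₀ hs0 ht0 hx0 hy0
      _ ≤ ∑ a : V, ∑ b : V, c a b := hle S₀
      _ < M := hM
  have part1 : ∀ S : Finset V, s ∈ S → t ∉ S → cutCap c' S = minCut c' s t →
      x ∈ S ∧ y ∉ S := by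
    intro S hs ht heq
    by_cases hx : x ∈ S
    · by_cases hy : y ∈ S
      · exfalso
        have := hbig S hs ht (Or.inr hy)
        rw [heq] at this
        linarith
      · exact ⟨hx, hy⟩
    · exfalso
      have := hbig S hs ht (Or.inl hx)
      rw [heq] at this
      linarith
  refine ⟨part1, ?_⟩
  have hmem : minCut c' s t ∈ T' := by
    rw [hminT']; exact hT'ne.csInf_mem hT'fin
  obtain ⟨Sm, hsm, htm, hvm⟩ := hmem
  obtain ⟨hxm, hym⟩ := part1 Sm hsm htm hvm.symm
  have hcrossdef : minCutCross c s t (x, y) = sInf Tc := rfl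
  rw [hcrossdef]
  apply le_antisymm
  · apply le_csInf hTcne
    rintro r ⟨S, hs, ht, hx, hy, rfl⟩
    rw [← hcross S hs ht hx hy, hminT']
    exact csInf_le hT'bdd ⟨S, hs, ht, rfl⟩
  · rw [hvm, hcross Sm hsm htm hxm hym]
    exact csInf_le hTcbdd ⟨Sm, hsm, htm, hxm, hym, rfl⟩
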